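/- Let N ≥ 0 be an integer and h > 0. For μ ≥ 1 define V : ℂ → ℝ by V(y) = μ − 2 log(1 + (e^{μ} h/(8(1+N)²)) |y^{N+1} − 1|²). Then there is a constant C depending only on N and h such that for all y with |y| = R ≥ 2: |V(y) + μ + 2 log(h/8) − 4 log(1+N) + 4(1+N) log R| ≤ C (R^{-(N+1)} + e^{-μ}). -/
import Mathlib


open Real

private lemma abs_log_le_aux {A : ℝ} (hA : 1/4 ≤ A) : |Real.log A| ≤ 4 * |A - 1| := by
  have hA0 : 0 < A := by linarith
  rcases le_or_gt 1 A with h1 | h1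
  · have hl : Real.log A ≤ A - 1 := Real.log_le_sub_one_of_pos hA0
    have hl0 : 0 ≤ Real.log A := Real.log_nonneg h1
    rw [abs_of_nonneg hl0, abs_of_nonneg (by linarith)]
    linarith
  · have hl : Real.log A⁻¹ ≤ A⁻¹ - 1 := Real.log_le_sub_one_of_pos (by positivity)
    rw [Real.log_inv] at hl
    have hl0 : Real.log A < 0 := Real.log_neg hA0 h1
    have hAinv : A⁻¹ ≤ 4 := by
      rw [inv_le_comm₀ hA0 (by norm_num)]
      linarith
    rw [abs_of_neg hl0, abs_of_neg (by linarith)]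
    have : A⁻¹ - 1 ≤ 4 * (1 - A) := by
      have h4 : A⁻¹ * A = 1 := inv_mul_cancel₀ (ne_of_gt hA0)
      nlinarith
    linarith

set_option maxHeartbeats 1000000 in
/-- boundary asymptotics of the explicit global solution
`V(y) = μ - 2 log(1 + (e^μ h/(8(1+N)²)) |y^{N+1} - 1|²)` for `|y| = R ≥ 2`. -/
theorem global_solution_asymptotics (N : ℕ) (h : ℝ) (hh : 0 < h) :
    ∃ C : ℝ, ∀ μ : ℝ, 1 ≤ μ → ∀ R : ℝ, 2 ≤ R → ∀ y : ℂ, ‖y‖ = R →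
      |(μ - 2 * Real.log (1 + Real.exp μ * h / (8 * ((N:ℝ) + 1) ^ 2) * ‖y ^ (N + 1) - 1‖ ^ 2))
          + μ + 2 * Real.log (h / 8) - 4 * Real.log ((N:ℝ) + 1) + 4 * ((N:ℝ) + 1) * Real.log R|
        ≤ C * ((R ^ (N + 1))⁻¹ + Real.exp (-μ)) := by
  have hN1 : (0:ℝ) < (N:ℝ) + 1 := by positivity
  set c : ℝ := h / (8 * ((N:ℝ) + 1) ^ 2) with hc
  have hcpos : 0 < c := by positivity
  refine ⟨24 + 2 / c, ?_⟩
  intro μ hμ R hR y hy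
  set S : ℝ := R ^ (N + 1) with hS
  have hR1 : (1:ℝ) ≤ R := by linarith
  have hS2 : 2 ≤ S := le_trans hR (by
    calc R = R ^ 1 := (pow_one R).symm
    _ ≤ R ^ (N + 1) := pow_le_pow_right₀ hR1 (by omega))
  have hSpos : 0 < S := by linarith
  set t : ℝ := ‖y ^ (N + 1) - 1‖ ^ 2 with ht
  have hnz : ‖y ^ (N + 1)‖ = S := by rw [norm_pow, hy]
  have hub' : ‖y ^ (N + 1) - 1‖ ≤ S + 1 := by
    have := norm_sub_le (y ^ (N + 1)) 1
    simpa [hnz] using this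
  have hlb' : S - 1 ≤ ‖y ^ (N + 1) - 1‖ := by
    have := norm_sub_norm_le (y ^ (N + 1)) (1 : ℂ)
    simpa [hnz] using this
  have htlb : (S - 1) ^ 2 ≤ t := by
    rw [ht]; exact pow_le_pow_left₀ (by linarith) hlb' 2
  have htub : t ≤ (S + 1) ^ 2 := by
    rw [ht]; exact pow_le_pow_left₀ (norm_nonneg _) hub' 2
  set E : ℝ := Real.exp μ with hE
  have hEpos : 0 < E := Real.exp_pos μ
  have hE1 : 1 ≤ E := by
    rw [hE]; calc (1:ℝ) = Real.exp 0 := (Real.exp_zero).symm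
    _ ≤ Real.exp μ := Real.exp_le_exp.mpr (by linarith)
  have htpos : 0 ≤ t := by positivity
  set A : ℝ := (1 + c * E * t) / (c * E * S ^ 2) with hA
  have hden : 0 < c * E * S ^ 2 := by positivity
  have hnum : 0 < 1 + c * E * t := by positivity
  -- rewrite the expression as -(2 log A)
  have harg : Real.exp μ * h / (8 * ((N:ℝ) + 1) ^ 2) * t = c * E * t := by
    rw [hc, hE]; ring
  have hlogA : Real.log A = Real.log (1 + c * E * t) - Real.log (c * E * S ^ 2) := by
    rw [hA, Real.log_div (ne_of_gt hnum) (ne_of_gt hden)]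
  have hlogden : Real.log (c * E * S ^ 2)
      = (Real.log (h / 8) - 2 * Real.log ((N:ℝ) + 1)) + μ + 2 * (((N:ℕ) + 1 : ℝ)) * Real.log R := by
    rw [Real.log_mul (by positivity) (by positivity), Real.log_mul (by positivity) (by positivity)]
    have h1 : Real.log c = Real.log (h / 8) - 2 * Real.log ((N:ℝ) + 1) := by
      rw [hc, Real.log_div (ne_of_gt hh) (by positivity), Real.log_mul (by norm_num) (by positivity),
        Real.log_pow, Real.log_div (ne_of_gt hh) (by norm_num)]
      push_cast; ring
    have h2 : Real.log E = μ := by rw [hE, Real.log_exp]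
    have h3 : Real.log (S ^ 2) = 2 * (((N:ℕ) + 1 : ℝ)) * Real.log R := by
      rw [Real.log_pow, hS, Real.log_pow]
      push_cast; ring
    rw [h1, h2, h3]
  have hkey : (μ - 2 * Real.log (1 + Real.exp μ * h / (8 * ((N:ℝ) + 1) ^ 2) * t))
          + μ + 2 * Real.log (h / 8) - 4 * Real.log ((N:ℝ) + 1) + 4 * ((N:ℝ) + 1) * Real.log R
        = -(2 * Real.log A) := by
    rw [harg, hlogA, hlogden]; push_cast; ring
  rw [hkey, abs_neg, abs_mul, abs_of_nonneg (by norm_num : (0:ℝ) ≤ 2)]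
  -- bound A from below by 1/4
  have hA14 : 1/4 ≤ A := by
    rw [hA, le_div_iff₀ hden]
    have h1 : S ^ 2 / 4 ≤ (S - 1) ^ 2 := by nlinarith
    have h2 : (S ^ 2 / 4) * (c * E) ≤ t * (c * E) :=
      mul_le_mul_of_nonneg_right (h1.trans htlb) (by positivity)
    have h3 : 1 / 4 * (c * E * S ^ 2) = S ^ 2 / 4 * (c * E) := by ring
    have h4 : 0 ≤ c * E * t := by positivity
    have h5 : t * (c * E) = c * E * t := by ring
    rw [h3]; linarith [h2, h4, h5.le, h5.ge]
  -- bound |A - 1|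
  have hAm1 : |A - 1| ≤ (1 + c * E * (2 * S + 1)) / (c * E * S ^ 2) := by
    have heq : A - 1 = (1 + c * E * (t - S ^ 2)) / (c * E * S ^ 2) := by
      rw [hA]; field_simp; ring
    rw [heq, abs_div, abs_of_pos hden]
    gcongr
    have e1 : (S + 1) ^ 2 = S ^ 2 + 2 * S + 1 := by ring
    have e2 : (S - 1) ^ 2 = S ^ 2 - 2 * S + 1 := by ring
    have hts : |t - S ^ 2| ≤ 2 * S + 1 := by
      rw [abs_le]; constructor <;> linarith
    have hmul : c * E * |t - S ^ 2| ≤ c * E * (2 * S + 1) :=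
      mul_le_mul_of_nonneg_left hts (by positivity)
    calc |1 + c * E * (t - S ^ 2)| ≤ |(1:ℝ)| + |c * E * (t - S ^ 2)| := abs_add_le _ _
      _ = 1 + c * E * |t - S ^ 2| := by
          rw [abs_one, abs_mul, abs_of_nonneg (by positivity : (0:ℝ) ≤ c * E)]
      _ ≤ 1 + c * E * (2 * S + 1) := by linarith
  -- final chain
  have hfin : 8 * ((1 + c * E * (2 * S + 1)) / (c * E * S ^ 2))
      ≤ (24 + 2 / c) * (S⁻¹ + E⁻¹) := by
    rw [mul_div_assoc', div_le_iff₀ hden]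
    have expand : (24 + 2 / c) * (S⁻¹ + E⁻¹) * (c * E * S ^ 2)
        = 24 * c * E * S + 2 * E * S + 24 * c * S ^ 2 + 2 * S ^ 2 := by
      field_simp; ring
    rw [expand]
    have k1 : 8 ≤ 2 * S ^ 2 := by nlinarith
    have k2 : 8 * (c * E * (2 * S + 1)) ≤ 24 * c * E * S := by nlinarith [mul_pos hcpos hEpos]
    have k3 : 0 ≤ 2 * E * S := by positivity
    have k4 : 0 ≤ 24 * c * S ^ 2 := by positivity
    nlinarith [k1, k2, k3, k4]
  have hexpneg : Real.exp (-μ) = E⁻¹ := by rw [hE, Real.exp_neg]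
  rw [hexpneg]
  calc 2 * |Real.log A| ≤ 2 * (4 * |A - 1|) := by
        have := abs_log_le_aux hA14
        linarith
    _ = 8 * |A - 1| := by ring
    _ ≤ 8 * ((1 + c * E * (2 * S + 1)) / (c * E * S ^ 2)) := by linarith [hAm1]
    _ ≤ (24 + 2 / c) * (S⁻¹ + E⁻¹) := hfin
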